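/- Under the canonical form hypotheses, write Z_N = W_2 R_{22} + W_3 R_{32} with R_{22} invertible (which holds since [Z_N Z_C] spans N(K) and Z_C spans Z_c). Then Z_N^T K_G Z_N = R_{22}^T Λ_2 R_{22}; in particular Z_N^T K_G Z_N is nonsingular and has the same numbers of positive and negative eigenvalues as Λ_2. -/

import Mathlib

open Matrix Finset

noncomputable section
namespace Stmt17Aux

variable {n : ℕ}

/-- mulVec as a linear map on EuclideanSpace. -/
def mvLin (M : Matrix (Fin n) (Fin n) ℝ) :
    EuclideanSpace ℝ (Fin n) →ₗ[ℝ] EuclideanSpace ℝ (Fin n) where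
  toFun x := WithLp.toLp 2 (M *ᵥ x)
  map_add' x y := by simp [Matrix.mulVec_add]
  map_smul' c x := by simp [Matrix.mulVec_smul]

@[simp] lemma mvLin_apply (M : Matrix (Fin n) (Fin n) ℝ) (x : EuclideanSpace ℝ (Fin n)) :
    mvLin M x = M *ᵥ x := rfl

lemma mvLin_eq (M : Matrix (Fin n) (Fin n) ℝ) (x : EuclideanSpace ℝ (Fin n)) :
    mvLin M x = WithLp.toLp 2 (M *ᵥ x) := rfl

open RealInnerProductSpace in
lemma quad_eval (M : Matrix (Fin n) (Fin n) ℝ)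
    (v : OrthonormalBasis (Fin n) ℝ (EuclideanSpace ℝ (Fin n))) (μ : Fin n → ℝ)
    (hv : ∀ i, M *ᵥ (v i : Fin n → ℝ) = μ i • (v i : Fin n → ℝ))
    (x : EuclideanSpace ℝ (Fin n)) :
    ⟪x, mvLin M x⟫ = ∑ i, μ i * (v.repr x i)^2 := by
  have hLx : mvLin M x = ∑ j, (μ j * v.repr x j) • (v j : EuclideanSpace ℝ (Fin n)) := by
    conv_lhs => rw [← v.sum_repr x]
    rw [map_sum]
    refine Finset.sum_congr rfl fun j _ => ?_
    rw [_root_.map_smul, mvLin_eq, hv j, WithLp.toLp_smul, smul_smul, mul_comm]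
  rw [hLx, inner_sum]
  refine Finset.sum_congr rfl fun j _ => ?_
  rw [real_inner_smul_right, real_inner_comm, v.repr_apply_apply]
  ring

open RealInnerProductSpace in
lemma inner_eq_dot (a b : EuclideanSpace ℝ (Fin n)) :
    ⟪a, b⟫ = (a : Fin n → ℝ) ⬝ᵥ (b : Fin n → ℝ) := by
  simp [PiLp.inner_apply, dotProduct, mul_comm]

open RealInnerProductSpace in
lemma mem_span_repr_eq_zero (v : OrthonormalBasis (Fin n) ℝ (EuclideanSpace ℝ (Fin n)))
    (s : Set (Fin n)) (x : EuclideanSpace ℝ (Fin n))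
    (hx : x ∈ Submodule.span ℝ (⇑v '' s)) : ∀ i ∉ s, v.repr x i = 0 := by
  intro i hi
  rw [← v.coe_toBasis] at hx
  rw [Module.Basis.mem_span_image] at hx
  have : i ∉ (v.toBasis.repr x).support := fun h => hi (hx h)
  rw [Finsupp.notMem_support_iff] at this
  rw [← v.coe_toBasis_repr_apply, this]

open RealInnerProductSpace in
lemma sylvester_le (M M' P : Matrix (Fin n) (Fin n) ℝ) (hP : IsUnit P)
    (hM' : M' = Pᵀ * M * P)
    (v v' : OrthonormalBasis (Fin n) ℝ (EuclideanSpace ℝ (Fin n))) (μ μ' : Fin n → ℝ)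
    (hv : ∀ i, M *ᵥ ⇑(v i) = μ i • ⇑(v i))
    (hv' : ∀ i, M' *ᵥ ⇑(v' i) = μ' i • ⇑(v' i)) :
    Fintype.card {i // 0 < μ' i} ≤ Fintype.card {i // 0 < μ i} := by
  classical
  set s : Set (Fin n) := {i | 0 < μ' i} with hs
  set t : Set (Fin n) := {i | 0 < μ i} with ht
  set V' : Submodule ℝ (EuclideanSpace ℝ (Fin n)) := Submodule.span ℝ (⇑v' '' s) with hV'
  set U : Submodule ℝ (EuclideanSpace ℝ (Fin n)) := V'.map (mvLin P) with hU
  set Wn : Submodule ℝ (EuclideanSpace ℝ (Fin n)) := Submodule.span ℝ (⇑v '' tᶜ) with hWn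
  -- congruence identity
  have hcong : ∀ x : EuclideanSpace ℝ (Fin n),
      ⟪mvLin P x, mvLin M (mvLin P x)⟫ = ⟪x, mvLin M' x⟫ := by
    intro x
    rw [inner_eq_dot, inner_eq_dot, hM']
    show (P *ᵥ x) ⬝ᵥ (M *ᵥ (P *ᵥ x)) = x ⬝ᵥ ((Pᵀ * M * P) *ᵥ x)
    rw [← Matrix.mulVec_mulVec, ← Matrix.mulVec_mulVec, Matrix.dotProduct_mulVec x Pᵀ,
      Matrix.vecMul_transpose]
  -- positivity on U
  have hposU : ∀ z ∈ U, z ≠ 0 → 0 < ⟪z, mvLin M z⟫ := by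
    rintro z ⟨x, hx, rfl⟩ hz0
    have hx0 : x ≠ 0 := by rintro rfl; simp at hz0
    rw [hcong, quad_eval M' v' μ' hv' x]
    have hzero : ∀ i ∉ s, v'.repr x i = 0 := mem_span_repr_eq_zero v' s x hx
    have hex : ∃ i, v'.repr x i ≠ 0 := by
      by_contra h
      push_neg at h
      exact hx0 (v'.repr.map_eq_zero_iff.mp (by ext i; simpa using h i))
    obtain ⟨i, hi⟩ := hex
    have his : i ∈ s := by by_contra h; exact hi (hzero i h)
    refine Finset.sum_pos' (fun j _ => ?_) ⟨i, Finset.mem_univ i, ?_⟩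
    · by_cases hj : j ∈ s
      · exact mul_nonneg (le_of_lt hj) (sq_nonneg _)
      · rw [hzero j hj]; simp
    · exact mul_pos his (by positivity)
  -- nonpositivity on Wn
  have hnegW : ∀ z ∈ Wn, ⟪z, mvLin M z⟫ ≤ 0 := by
    intro z hz
    rw [quad_eval M v μ hv z]
    have hzero : ∀ i ∉ tᶜ, v.repr z i = 0 := mem_span_repr_eq_zero v tᶜ z hz
    refine Finset.sum_nonpos fun j _ => ?_
    by_cases hj : j ∈ tᶜ
    · have : ¬ 0 < μ j := hj
      exact mul_nonpos_of_nonpos_of_nonneg (not_lt.mp this) (sq_nonneg _)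
    · rw [hzero j hj]; simp
  -- disjoint
  have hdisj : U ⊓ Wn = ⊥ := by
    rw [Submodule.eq_bot_iff]
    rintro z ⟨hzU, hzW⟩
    by_contra hz0
    exact absurd (hnegW z hzW) (not_le.mpr (hposU z hzU hz0))
  -- injectivity of mvLin P
  have hinj : Function.Injective (mvLin P) := by
    have := Matrix.mulVec_injective_iff_isUnit.mpr hP
    intro x y hxy
    exact WithLp.ofLp_injective (p := 2) (this (congrArg WithLp.ofLp hxy))
  -- dimensions
  have hdimV' : Module.finrank ℝ V' = Fintype.card s := by
    have hli : LinearIndependent ℝ (fun i : s => (v' i : EuclideanSpace ℝ (Fin n))) := by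
      have := v'.toBasis.linearIndependent
      rw [v'.coe_toBasis] at this
      exact this.comp _ Subtype.val_injective
    have hrange : Set.range (fun i : s => (v' i : EuclideanSpace ℝ (Fin n))) = ⇑v' '' s := by
      rw [← Set.image_eq_range]
    rw [hV', ← hrange, finrank_span_eq_card hli]
  have hdimU : Module.finrank ℝ U = Fintype.card s := by
    rw [hU, ← hdimV']
    exact (LinearEquiv.finrank_eq (Submodule.equivMapOfInjective _ hinj V')).symm
  have hdimW : Module.finrank ℝ Wn = Fintype.card (↥(tᶜ)) := by
    have hli : LinearIndependent ℝ (fun i : ↥(tᶜ) => (v i : EuclideanSpace ℝ (Fin n))) := by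
      have := v.toBasis.linearIndependent
      rw [v.coe_toBasis] at this
      exact this.comp _ Subtype.val_injective
    have hrange : Set.range (fun i : ↥(tᶜ) => (v i : EuclideanSpace ℝ (Fin n))) = ⇑v '' tᶜ := by
      rw [← Set.image_eq_range]
    rw [hWn, ← hrange, finrank_span_eq_card hli]
  have hsum := Submodule.finrank_sup_add_finrank_inf_eq U Wn
  rw [hdisj] at hsum
  have hle : Module.finrank ℝ (U ⊔ Wn : Submodule ℝ (EuclideanSpace ℝ (Fin n))) ≤ n := by
    have := Submodule.finrank_le (U ⊔ Wn : Submodule ℝ (EuclideanSpace ℝ (Fin n)))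
    simpa [finrank_euclideanSpace_fin] using this
  have hcompl : Fintype.card (↥(tᶜ)) = n - Fintype.card t := by
    rw [Fintype.card_compl_set]; simp
  have htle : Fintype.card t ≤ n := by
    have := Fintype.card_subtype_le (fun i => i ∈ t)
    simpa using this
  simp only [finrank_bot, add_zero] at hsum
  rw [hdimU, hdimW, hcompl] at hsum
  have : Fintype.card s + (n - Fintype.card t) ≤ n := hsum ▸ hle
  have hfinal : Fintype.card s ≤ Fintype.card t := by omega
  convert hfinal using 2
  all_goals rfl

variable {N : Type*} [Fintype N] {m₂ m₃ : Type*}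

lemma conj_submatrix (A M : Matrix N N ℝ) (f : m₂ → N) (g : m₃ → N) :
    (A.submatrix id f)ᵀ * M * (A.submatrix id g) = (Aᵀ * M * A).submatrix f g := by
  ext i j
  simp only [Matrix.mul_apply, Matrix.submatrix_apply, Matrix.transpose_apply, id_eq,
    Finset.sum_mul, Finset.mul_sum]

lemma diag_mulVec_basis (Λ : Fin n → ℝ) (i : Fin n) :
    (Matrix.diagonal Λ) *ᵥ ⇑((EuclideanSpace.basisFun (Fin n) ℝ) i)
      = Λ i • ⇑((EuclideanSpace.basisFun (Fin n) ℝ) i) := by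
  classical
  funext j
  simp only [EuclideanSpace.basisFun_apply, Matrix.mulVec_diagonal,
    Pi.smul_apply, smul_eq_mul]
  by_cases h : j = i
  · subst h; simp
  · simp [h]

end Stmt17Aux
end

open Matrix

/-- Under the canonical form hypotheses, with Z_N = W₂R₂₂ + W₃R₃₂ and
R₂₂ invertible, one has Z_Nᵀ K_G Z_N = R₂₂ᵀ Λ₂ R₂₂; in particular Z_Nᵀ K_G Z_N is
nonsingular and has the same numbers of positive and negative eigenvalues as Λ₂. -/
theorem stmt17 {n1 n2 n3 : ℕ}
    (K KG : Matrix (Fin n1 ⊕ (Fin n2 ⊕ Fin n3)) (Fin n1 ⊕ (Fin n2 ⊕ Fin n3)) ℝ)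
    (hK : Kᵀ = K) (hKG : KGᵀ = KG)
    (W : Matrix (Fin n1 ⊕ (Fin n2 ⊕ Fin n3)) (Fin n1 ⊕ (Fin n2 ⊕ Fin n3)) ℝ)
    (hW : IsUnit W)
    (Λ1 : Fin n1 → ℝ) (Λ2 : Fin n2 → ℝ) (hΛ2 : ∀ i, Λ2 i ≠ 0)
    (hcanKG : Wᵀ * KG * W
      = Matrix.fromBlocks (Matrix.diagonal Λ1) 0 0
          (Matrix.fromBlocks (Matrix.diagonal Λ2) 0 0 0))
    (hcanK : Wᵀ * K * W
      = Matrix.fromBlocks (1 : Matrix (Fin n1) (Fin n1) ℝ) 0 0 0)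
    (ZN : Matrix (Fin n1 ⊕ (Fin n2 ⊕ Fin n3)) (Fin n2) ℝ)
    (R22 : Matrix (Fin n2) (Fin n2) ℝ) (R32 : Matrix (Fin n3) (Fin n2) ℝ)
    (hR22 : IsUnit R22)
    (hZN : ZN = W.submatrix id (Sum.inr ∘ Sum.inl : Fin n2 → _) * R22
      + W.submatrix id (Sum.inr ∘ Sum.inr : Fin n3 → _) * R32) :
    ZNᵀ * KG * ZN = R22ᵀ * Matrix.diagonal Λ2 * R22 ∧
    IsUnit (ZNᵀ * KG * ZN) ∧
    ∀ h : (ZNᵀ * KG * ZN).IsHermitian,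
      Nat.card {i // 0 < h.eigenvalues i} = Nat.card {i // 0 < Λ2 i} ∧
      Nat.card {i // h.eigenvalues i < 0} = Nat.card {i // Λ2 i < 0} := by
  classical
  set A := W.submatrix id (Sum.inr ∘ Sum.inl : Fin n2 → _) with hA2
  set B := W.submatrix id (Sum.inr ∘ Sum.inr : Fin n3 → _) with hB3
  have hsub22 : Aᵀ * KG * A = Matrix.diagonal Λ2 := by
    rw [hA2, Stmt17Aux.conj_submatrix, hcanKG]
    ext i j
    simp [Matrix.submatrix_apply]
  have hsub23 : Aᵀ * KG * B = 0 := by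
    rw [hA2, hB3, Stmt17Aux.conj_submatrix, hcanKG]
    ext i j
    simp [Matrix.submatrix_apply]
  have hsub32 : Bᵀ * KG * A = 0 := by
    rw [hA2, hB3, Stmt17Aux.conj_submatrix, hcanKG]
    ext i j
    simp [Matrix.submatrix_apply]
  have hsub33 : Bᵀ * KG * B = 0 := by
    rw [hB3, Stmt17Aux.conj_submatrix, hcanKG]
    ext i j
    simp [Matrix.submatrix_apply]
  have e22R : Aᵀ * (KG * (A * R22)) = Matrix.diagonal Λ2 * R22 := by
    rw [← Matrix.mul_assoc, ← Matrix.mul_assoc, hsub22]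
  have e23S : Aᵀ * (KG * (B * R32)) = 0 := by
    rw [← Matrix.mul_assoc, ← Matrix.mul_assoc, hsub23, Matrix.zero_mul]
  have e32R : Bᵀ * (KG * (A * R22)) = 0 := by
    rw [← Matrix.mul_assoc, ← Matrix.mul_assoc, hsub32, Matrix.zero_mul]
  have e33S : Bᵀ * (KG * (B * R32)) = 0 := by
    rw [← Matrix.mul_assoc, ← Matrix.mul_assoc, hsub33, Matrix.zero_mul]
  have hmain : ZNᵀ * KG * ZN = R22ᵀ * Matrix.diagonal Λ2 * R22 := by
    rw [hZN, Matrix.transpose_add, Matrix.transpose_mul, Matrix.transpose_mul]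
    simp only [Matrix.add_mul, Matrix.mul_add, Matrix.mul_assoc]
    rw [e22R, e23S, e32R, e33S]
    simp
  have hDunit : IsUnit (Matrix.diagonal Λ2) := by
    rw [Matrix.isUnit_iff_isUnit_det, Matrix.det_diagonal]
    exact isUnit_iff_ne_zero.mpr (Finset.prod_ne_zero_iff.mpr fun i _ => hΛ2 i)
  have hRTunit : IsUnit R22ᵀ := by
    rw [Matrix.isUnit_iff_isUnit_det, Matrix.det_transpose]
    exact (Matrix.isUnit_iff_isUnit_det _).mp hR22
  have hUnit : IsUnit (ZNᵀ * KG * ZN) := by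
    rw [hmain]
    exact (hRTunit.mul hDunit).mul hR22
  refine ⟨hmain, hUnit, fun h => ?_⟩
  have hRdet : IsUnit R22.det := (Matrix.isUnit_iff_isUnit_det _).mp hR22
  have hRR : R22 * R22⁻¹ = 1 := Matrix.mul_nonsing_inv _ hRdet
  have hTT : (R22⁻¹)ᵀ * R22ᵀ = 1 := by
    rw [← Matrix.transpose_mul, hRR, Matrix.transpose_one]
  have hRinv : IsUnit (R22⁻¹) := Matrix.isUnit_nonsing_inv_iff.mpr hR22
  have hback : Matrix.diagonal Λ2 = (R22⁻¹)ᵀ * (ZNᵀ * KG * ZN) * R22⁻¹ := by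
    rw [hmain]
    calc Matrix.diagonal Λ2
        = ((R22⁻¹)ᵀ * R22ᵀ) * Matrix.diagonal Λ2 * (R22 * R22⁻¹) := by
          rw [hTT, hRR, Matrix.one_mul, Matrix.mul_one]
      _ = (R22⁻¹)ᵀ * (R22ᵀ * Matrix.diagonal Λ2 * R22) * R22⁻¹ := by
          simp only [Matrix.mul_assoc]
  have hnegmain : -(ZNᵀ * KG * ZN) = R22ᵀ * Matrix.diagonal (-Λ2) * R22 := by
    have hdneg : Matrix.diagonal (-Λ2) = -Matrix.diagonal Λ2 := by
      ext i j
      by_cases hij : i = j <;> simp [Matrix.diagonal_apply, hij]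
    rw [hmain, hdneg]
    simp only [Matrix.mul_neg, Matrix.neg_mul]
  have hnegback : Matrix.diagonal (-Λ2) = (R22⁻¹)ᵀ * (-(ZNᵀ * KG * ZN)) * R22⁻¹ := by
    rw [hnegmain]
    calc Matrix.diagonal (-Λ2)
        = ((R22⁻¹)ᵀ * R22ᵀ) * Matrix.diagonal (-Λ2) * (R22 * R22⁻¹) := by
          rw [hTT, hRR, Matrix.one_mul, Matrix.mul_one]
      _ = (R22⁻¹)ᵀ * (R22ᵀ * Matrix.diagonal (-Λ2) * R22) * R22⁻¹ := by
          simp only [Matrix.mul_assoc]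
  have hv' := h.mulVec_eigenvectorBasis
  have hnegv' : ∀ i, (-(ZNᵀ * KG * ZN)) *ᵥ ⇑(h.eigenvectorBasis i)
      = (fun i => -h.eigenvalues i) i • ⇑(h.eigenvectorBasis i) := by
    intro i
    rw [Matrix.neg_mulVec, hv' i]
    simp [neg_smul]
  have hle1 : Fintype.card {i // 0 < h.eigenvalues i} ≤ Fintype.card {i // 0 < Λ2 i} :=
    Stmt17Aux.sylvester_le (Matrix.diagonal Λ2) (ZNᵀ * KG * ZN) R22 hR22 hmain
      (EuclideanSpace.basisFun (Fin n2) ℝ) h.eigenvectorBasis Λ2 h.eigenvalues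
      (Stmt17Aux.diag_mulVec_basis Λ2) hv'
  have hle2 : Fintype.card {i // 0 < Λ2 i} ≤ Fintype.card {i // 0 < h.eigenvalues i} :=
    Stmt17Aux.sylvester_le (ZNᵀ * KG * ZN) (Matrix.diagonal Λ2) R22⁻¹ hRinv hback
      h.eigenvectorBasis (EuclideanSpace.basisFun (Fin n2) ℝ) h.eigenvalues Λ2
      hv' (Stmt17Aux.diag_mulVec_basis Λ2)
  have hle3 : Fintype.card {i // 0 < -h.eigenvalues i} ≤ Fintype.card {i // 0 < -Λ2 i} :=
    Stmt17Aux.sylvester_le (Matrix.diagonal (-Λ2)) (-(ZNᵀ * KG * ZN)) R22 hR22 hnegmain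
      (EuclideanSpace.basisFun (Fin n2) ℝ) h.eigenvectorBasis (-Λ2)
      (fun i => -h.eigenvalues i)
      (Stmt17Aux.diag_mulVec_basis (-Λ2)) hnegv'
  have hle4 : Fintype.card {i // 0 < -Λ2 i} ≤ Fintype.card {i // 0 < -h.eigenvalues i} :=
    Stmt17Aux.sylvester_le (-(ZNᵀ * KG * ZN)) (Matrix.diagonal (-Λ2)) R22⁻¹ hRinv hnegback
      h.eigenvectorBasis (EuclideanSpace.basisFun (Fin n2) ℝ)
      (fun i => -h.eigenvalues i) (-Λ2)
      hnegv' (Stmt17Aux.diag_mulVec_basis (-Λ2))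
  constructor
  · rw [Nat.card_eq_fintype_card, Nat.card_eq_fintype_card]
    exact le_antisymm hle1 hle2
  · rw [Nat.card_eq_fintype_card, Nat.card_eq_fintype_card]
    have e1 : Fintype.card {i // h.eigenvalues i < 0}
        = Fintype.card {i // 0 < -h.eigenvalues i} :=
      Fintype.card_congr (Equiv.subtypeEquivRight fun i => neg_pos.symm)
    have e2 : Fintype.card {i // Λ2 i < 0} = Fintype.card {i // 0 < -Λ2 i} :=
      Fintype.card_congr (Equiv.subtypeEquivRight fun i => by simp [neg_pos])
    rw [e1, e2]
    exact le_antisymm hle3 hle4
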